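/- arXiv:1503.02815 — 3 statements merged into one kernel-verified Lean document; each statement's English description precedes it below -/
import Mathlib

section
/- Let X and Y be independent Gamma(N,1) random variables, N a positive integer. Then for z > 0, P(XY < z) = 1 - (2/(N-1)!) Σ_{p=0}^{N-1} (√z)^{N+p} K_{N-p}(2√z)/p!, where K_ν is the modified Bessel function of the second kind. -/
open Real Set MeasureTheory ProbabilityTheory

/-- The modified Bessel function of the second kind,
`K_ν(x) = ∫₀^∞ e^{-x cosh t} cosh(νt) dt`. -/
noncomputable def besselK (ν x : ℝ) : ℝ :=
  ∫ t in Ioi (0:ℝ), Real.exp (-x * Real.cosh t) * Real.cosh (ν * t)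


open Filter
open scoped ENNReal NNReal

set_option maxHeartbeats 1000000

lemma deriv_aux (n : ℕ) (x : ℝ) :
    HasDerivAt (fun x : ℝ => -(Real.exp (-x) * ∑ p ∈ Finset.range (n+1), (n.factorial : ℝ) / p.factorial * x ^ p))
      (x ^ n * Real.exp (-x)) x := by
  have hexp : HasDerivAt (fun x : ℝ => Real.exp (-x)) (-Real.exp (-x)) x := by
    have := ((hasDerivAt_id x).neg).exp
    simpa using this
  have hsum : HasDerivAt (fun x : ℝ => ∑ p ∈ Finset.range (n+1), (n.factorial : ℝ) / p.factorial * x ^ p)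
      (∑ p ∈ Finset.range (n+1), (n.factorial : ℝ) / p.factorial * (p * x ^ (p-1))) x :=
    HasDerivAt.fun_sum fun p _ => (hasDerivAt_pow p x).const_mul _
  have key : (∑ p ∈ Finset.range (n+1), (n.factorial : ℝ) / p.factorial * (p * x ^ (p-1)))
      = ∑ p ∈ Finset.range n, (n.factorial : ℝ) / p.factorial * x ^ p := by
    rw [Finset.sum_range_succ']
    simp only [Nat.cast_zero, zero_mul, mul_zero, add_zero]
    refine Finset.sum_congr rfl fun p _ => ?_
    have : ((p+1).factorial : ℝ) = (p+1) * p.factorial := by exact_mod_cast Nat.factorial_succ p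
    rw [this]
    simp only [Nat.add_sub_cancel, Nat.cast_add, Nat.cast_one]
    have hp : (p.factorial : ℝ) ≠ 0 := Nat.cast_ne_zero.mpr (Nat.factorial_ne_zero p)
    field_simp
  have := (hexp.mul hsum).neg
  rw [key] at this
  refine this.congr_deriv ?_
  rw [Finset.sum_range_succ]
  have hn : (n.factorial : ℝ) ≠ 0 := Nat.cast_ne_zero.mpr (Nat.factorial_ne_zero n)
  field_simp
  ring

lemma tendsto_aux (n : ℕ) :
    Tendsto (fun x : ℝ => -(Real.exp (-x) * ∑ p ∈ Finset.range (n+1), (n.factorial : ℝ) / p.factorial * x ^ p))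
      atTop (nhds 0) := by
  have : ∀ x : ℝ, -(Real.exp (-x) * ∑ p ∈ Finset.range (n+1), (n.factorial : ℝ) / p.factorial * x ^ p)
      = -∑ p ∈ Finset.range (n+1), (n.factorial : ℝ) / p.factorial * (x ^ p * Real.exp (-x)) := by
    intro x; rw [Finset.mul_sum]; congr 1; refine Finset.sum_congr rfl fun p _ => ?_; ring
  simp_rw [this]
  rw [show (0:ℝ) = -∑ p ∈ Finset.range (n+1), (n.factorial : ℝ) / p.factorial * 0 by simp]
  exact (tendsto_finset_sum _ fun p _ =>
    (tendsto_pow_mul_exp_neg_atTop_nhds_zero p).const_mul _).neg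

lemma integral_tail (n : ℕ) (t : ℝ) (ht : 0 ≤ t) :
    ∫ x in Ioi t, x ^ n * Real.exp (-x)
      = Real.exp (-t) * ∑ p ∈ Finset.range (n+1), (n.factorial : ℝ) / p.factorial * t ^ p := by
  have h := integral_Ioi_of_hasDerivAt_of_nonneg (g := fun x : ℝ =>
      -(Real.exp (-x) * ∑ p ∈ Finset.range (n+1), (n.factorial : ℝ) / p.factorial * x ^ p))
      (g' := fun x => x ^ n * Real.exp (-x)) (a := t) (l := 0)
      ((deriv_aux n t).continuousAt.continuousWithinAt)
      (fun x _ => deriv_aux n x)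
      (fun x hx => mul_nonneg (pow_nonneg (le_trans ht (le_of_lt hx)) n) (Real.exp_pos _).le)
      (tendsto_aux n)
  rw [h]; ring

lemma integrable_tail (n : ℕ) (t : ℝ) (ht : 0 ≤ t) :
    IntegrableOn (fun x => x ^ n * Real.exp (-x)) (Ioi t) :=
  integrableOn_Ioi_deriv_of_nonneg ((deriv_aux n t).continuousAt.continuousWithinAt)
    (fun x _ => deriv_aux n x)
    (fun x hx => mul_nonneg (pow_nonneg (le_trans ht (le_of_lt hx)) n) (Real.exp_pos _).le)
    (tendsto_aux n)

lemma gammaPDFReal_eq_pos {N : ℕ} (hN : 1 ≤ N) {x : ℝ} (hx : 0 < x) :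
    gammaPDFReal N 1 x = x ^ (N-1) * Real.exp (-x) / ((N-1).factorial : ℝ) := by
  rw [gammaPDFReal, if_pos hx.le]
  have h2 : Real.Gamma (N : ℝ) = ((N-1).factorial : ℝ) := by
    rw [show ((N : ℝ)) = ((N - 1 : ℕ) : ℝ) + 1 by rw [Nat.cast_sub hN]; ring,
      Real.Gamma_nat_eq_factorial]
  have h1 : x ^ ((N:ℝ) - 1) = x ^ (N-1 : ℕ) := by
    rw [show ((N : ℝ) - 1) = ((N - 1 : ℕ) : ℝ) by rw [Nat.cast_sub hN]; norm_num,
      Real.rpow_natCast]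
  rw [h2, h1, Real.one_rpow]
  ring_nf

lemma gammaMeasure_Ici {N : ℕ} (hN : 1 ≤ N) {t : ℝ} (ht : 0 < t) :
    gammaMeasure N 1 (Ici t)
      = ENNReal.ofReal (Real.exp (-t) * ∑ p ∈ Finset.range N, t ^ p / p.factorial) := by
  rw [gammaMeasure, withDensity_apply _ measurableSet_Ici]
  have hIoi : (volume : Measure ℝ).restrict (Ici t) = volume.restrict (Ioi t) :=
    restrict_Ioi_eq_restrict_Ici.symm
  rw [hIoi]
  have hcongr : ∀ᵐ x ∂(volume.restrict (Ioi t)),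
      gammaPDF N 1 x = ENNReal.ofReal (x ^ (N-1) * Real.exp (-x) / ((N-1).factorial : ℝ)) := by
    filter_upwards [ae_restrict_mem measurableSet_Ioi] with x hx
    rw [gammaPDF, gammaPDFReal_eq_pos hN (ht.trans hx)]
  rw [lintegral_congr_ae hcongr,
    ← ofReal_integral_eq_lintegral_ofReal
      (((integrable_tail (N-1) t ht.le).div_const _))
      (by
        filter_upwards [ae_restrict_mem measurableSet_Ioi] with x hx
        have h0 : (0:ℝ) < ((N-1).factorial : ℝ) := Nat.cast_pos.mpr (Nat.factorial_pos (N-1))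
        have hx0 : 0 < x := ht.trans hx
        simp only [Pi.zero_apply]
        positivity)]
  congr 1
  rw [MeasureTheory.integral_div, integral_tail (N-1) t ht.le, Nat.sub_add_cancel hN,
    mul_div_assoc, Finset.sum_div, Finset.mul_sum]
  rw [Finset.mul_sum]
  refine Finset.sum_congr rfl fun p hp => ?_
  have hfac : ((N-1).factorial : ℝ) ≠ 0 := Nat.cast_ne_zero.mpr (Nat.factorial_ne_zero _)
  field_simp

lemma integrable_kernel (k : ℕ) (w : ℝ) (hw : 0 ≤ w) :
    IntegrableOn (fun x => x ^ k * Real.exp (-(x + w/x))) (Ioi 0) := by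
  refine MeasureTheory.Integrable.mono (integrable_tail k 0 le_rfl) ?_ ?_
  · exact ((measurable_id.pow_const k).mul
      ((measurable_id.add (measurable_const.div measurable_id)).neg.exp)).aestronglyMeasurable
  · filter_upwards [ae_restrict_mem measurableSet_Ioi] with x hx
    have hx0 : (0:ℝ) < x := hx
    rw [Real.norm_eq_abs, Real.norm_eq_abs, abs_of_nonneg (by positivity),
      abs_of_nonneg (by positivity)]
    refine mul_le_mul_of_nonneg_left ?_ (by positivity)
    exact Real.exp_le_exp.mpr (by nlinarith [div_nonneg hw hx0.le])

lemma image_cexp {c : ℝ} (hc : 0 < c) : (fun t : ℝ => c * Real.exp t) '' univ = Ioi 0 := by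
  rw [image_univ]
  ext y
  simp only [Set.mem_range, Set.mem_Ioi]
  constructor
  · rintro ⟨t, rfl⟩; positivity
  · intro hy
    exact ⟨Real.log (y/c), by rw [Real.exp_log (by positivity)]; field_simp⟩

lemma integral_exp_cosh {a ν : ℝ}
    (h : Integrable (fun t => Real.exp (-a * Real.cosh t) * Real.exp (ν * t))) :
    ∫ t, Real.exp (-a * Real.cosh t) * Real.exp (ν * t) = 2 * besselK ν a := by
  set f : ℝ → ℝ := fun t => Real.exp (-a * Real.cosh t) * Real.exp (ν * t) with hf
  set g : ℝ → ℝ := fun t => Real.exp (-a * Real.cosh t) * Real.cosh (ν * t) with hg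
  have hfneg : Integrable (fun t => f (-t)) := h.comp_neg
  have h1 : ∫ t, f (-t) = ∫ t, f t := integral_neg_eq_self f volume
  have hgf : ∀ t, g t = (f t + f (-t)) / 2 := by
    intro t
    simp only [hf, hg, Real.cosh_neg, mul_neg, neg_mul, Real.cosh_eq, neg_neg]
    ring
  have hgint : Integrable g := by
    have := (h.add hfneg).div_const 2
    exact this.congr (Filter.Eventually.of_forall fun t => (hgf t).symm)
  have h2 : ∫ t, f t = ∫ t, g t := by
    have : ∫ t, g t = ∫ t, (f t + f (-t)) / 2 := integral_congr_ae
      (Filter.Eventually.of_forall hgf)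
    rw [this, integral_div, integral_add h hfneg, h1]
    ring
  have hgeven : ∀ t, g (-t) = g t := by
    intro t; simp only [hg, Real.cosh_neg, mul_neg, neg_neg]
  have h3 : (∫ t in Iic (0:ℝ), g t) + (∫ t in Ioi (0:ℝ), g t) = ∫ t, g t :=
    intervalIntegral.integral_Iic_add_Ioi hgint.integrableOn hgint.integrableOn
  have h4 : ∫ t in Iic (0:ℝ), g t = ∫ t in Ioi (0:ℝ), g t := by
    have := integral_comp_neg_Ioi (0:ℝ) g
    rw [neg_zero] at this
    rw [← this]
    exact setIntegral_congr_fun measurableSet_Ioi fun t _ => hgeven t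
  rw [h2, ← h3, h4, besselK]
  ring

lemma integral_besselK (k : ℕ) {c : ℝ} (hc : 0 < c) :
    ∫ x in Ioi (0:ℝ), x ^ k * Real.exp (-(x + c^2 / x))
      = 2 * c ^ (k+1) * besselK ((k:ℝ)+1) (2*c) := by
  have hderiv : ∀ t ∈ (univ : Set ℝ), HasDerivWithinAt (fun t : ℝ => c * Real.exp t)
      (c * Real.exp t) univ t := fun t _ =>
    (((Real.hasDerivAt_exp t).const_mul c)).hasDerivWithinAt
  have hinj : InjOn (fun t : ℝ => c * Real.exp t) univ := fun s _ t _ hst =>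
    Real.exp_injective (mul_left_cancel₀ hc.ne' hst)
  have hval : ∀ t : ℝ, |c * Real.exp t| • ((c * Real.exp t) ^ k
        * Real.exp (-(c * Real.exp t + c^2 / (c * Real.exp t))))
      = c ^ (k+1) * (Real.exp (-(2*c) * Real.cosh t) * Real.exp (((k:ℝ)+1) * t)) := by
    intro t
    have he : (0:ℝ) < Real.exp t := Real.exp_pos t
    rw [abs_of_nonneg (by positivity), smul_eq_mul]
    rw [mul_pow, ← Real.exp_nat_mul]
    have harg : -(c * Real.exp t + c^2 / (c * Real.exp t)) = -(2*c) * Real.cosh t := by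
      rw [Real.cosh_eq, Real.exp_neg]
      field_simp
    rw [harg, show ((k:ℝ)+1) * t = (k:ℝ)*t + t by ring, Real.exp_add]
    ring
  have him := integral_image_eq_integral_abs_deriv_smul MeasurableSet.univ hderiv hinj
    (fun x => x ^ k * Real.exp (-(x + c^2 / x)))
  rw [image_cexp hc, Measure.restrict_univ] at him
  rw [him, integral_congr_ae (Filter.Eventually.of_forall hval), MeasureTheory.integral_const_mul]
  have hint : Integrable (fun t => Real.exp (-(2*c) * Real.cosh t)
      * Real.exp (((k:ℝ)+1) * t)) := by
    have h0 := (integrableOn_image_iff_integrableOn_abs_deriv_smul MeasurableSet.univ hderiv hinj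
      (fun x => x ^ k * Real.exp (-(x + c^2 / x)))).mp
      (by rw [image_cexp hc]; exact integrable_kernel k (c^2) (by positivity))
    rw [integrableOn_univ] at h0
    have h1 : Integrable (fun t : ℝ => c ^ (k+1) * (Real.exp (-(2*c) * Real.cosh t)
        * Real.exp (((k:ℝ)+1) * t))) :=
      h0.congr (Filter.Eventually.of_forall fun t => hval t)
    have h2 := h1.div_const (c ^ (k+1))
    refine h2.congr (Filter.Eventually.of_forall fun t => ?_)
    simp only
    rw [mul_comm, mul_div_assoc, div_self (by positivity), mul_one]
  rw [integral_exp_cosh hint]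
  ring

lemma besselK_nonneg (ν x : ℝ) : 0 ≤ besselK ν x :=
  setIntegral_nonneg measurableSet_Ioi fun t _ =>
    mul_nonneg (Real.exp_pos _).le (Real.cosh_pos _).le

/-- If `X, Y` are independent `Gamma(N,1)` random variables, then for `z > 0`,
`P(XY < z) = 1 - (2/(N-1)!) Σ_{p=0}^{N-1} (√z)^{N+p} K_{N-p}(2√z)/p!`. -/
theorem stmt9 {α : Type*} [MeasurableSpace α] (μ : Measure α) [IsProbabilityMeasure μ]
    (N : ℕ) (hN : 1 ≤ N) (X Y : α → ℝ) (hXm : Measurable X) (hYm : Measurable Y)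
    (hX : μ.map X = gammaMeasure N 1) (hY : μ.map Y = gammaMeasure N 1)
    (hXY : IndepFun X Y μ) (z : ℝ) (hz : 0 < z) :
    μ {ω | X ω * Y ω < z} =
      ENNReal.ofReal (1 - 2 / (Nat.factorial (N - 1) : ℝ) *
        ∑ p ∈ Finset.range N,
          (Real.sqrt z) ^ (N + p) * besselK ((N : ℝ) - (p : ℝ)) (2 * Real.sqrt z) /
            (Nat.factorial p : ℝ)) := by
  have hc0 : 0 < Real.sqrt z := Real.sqrt_pos.mpr hz
  have hcz : Real.sqrt z ^ 2 = z := Real.sq_sqrt hz.le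
  set c : ℝ := Real.sqrt z with hcdef
  set S : ℝ := 2 / ((N-1).factorial : ℝ) * ∑ p ∈ Finset.range N,
      c ^ (N+p) * besselK ((N:ℝ)-(p:ℝ)) (2*c) / (p.factorial : ℝ) with hSdef
  have hS0 : 0 ≤ S := by
    refine mul_nonneg (by positivity) (Finset.sum_nonneg fun p _ => ?_)
    have := besselK_nonneg ((N:ℝ)-(p:ℝ)) (2*c)
    positivity
  -- the key computation
  have hfacN : (0:ℝ) < ((N-1).factorial : ℝ) := Nat.cast_pos.mpr (Nat.factorial_pos _)
  haveI : IsProbabilityMeasure (gammaMeasure (N:ℝ) 1) :=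
    isProbabilityMeasure_gammaMeasure (by exact_mod_cast hN) one_pos
  set f : ℝ → ℝ := fun x => ∑ p ∈ Finset.range N,
      z ^ p / ((p.factorial : ℝ) * ((N-1).factorial : ℝ))
        * (x ^ (N-1-p) * Real.exp (-(x + z/x))) with hfdef
  have hfint : IntegrableOn f (Ioi 0) :=
    integrable_finset_sum _ fun p _ => ((integrable_kernel (N-1-p) z hz.le).const_mul _)
  have key : μ {ω | z ≤ X ω * Y ω} = ENNReal.ofReal S := by
    have hmap := (indepFun_iff_map_prod_eq_prod_map_map hXm.aemeasurable hYm.aemeasurable).mp hXY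
    rw [hX, hY] at hmap
    have hsetm : MeasurableSet {p : ℝ × ℝ | z ≤ p.1 * p.2} :=
      measurableSet_le measurable_const (measurable_fst.mul measurable_snd)
    have h1 : μ {ω | z ≤ X ω * Y ω}
        = (gammaMeasure N 1).prod (gammaMeasure N 1) {p : ℝ × ℝ | z ≤ p.1 * p.2} := by
      rw [← hmap, Measure.map_apply (hXm.prodMk hYm) hsetm]
      rfl
    rw [h1, Measure.prod_apply hsetm]
    have hinnerm : Measurable fun x : ℝ =>
        gammaMeasure (N:ℝ) 1 (Prod.mk x ⁻¹' {p : ℝ × ℝ | z ≤ p.1 * p.2}) :=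
      measurable_measure_prodMk_left hsetm
    have hlw : ∫⁻ x, gammaMeasure (N:ℝ) 1 (Prod.mk x ⁻¹' {p : ℝ × ℝ | z ≤ p.1 * p.2})
          ∂(gammaMeasure (N:ℝ) 1)
        = ∫⁻ x, (gammaPDF (N:ℝ) 1
          * fun x => gammaMeasure (N:ℝ) 1 (Prod.mk x ⁻¹' {p : ℝ × ℝ | z ≤ p.1 * p.2})) x := by
      conv_lhs => rw [gammaMeasure]
      exact lintegral_withDensity_eq_lintegral_mul _
        (measurable_gammaPDFReal (N:ℝ) 1).ennreal_ofReal hinnerm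
    rw [hlw]
    have hsplit : ∫⁻ x, (gammaPDF (N:ℝ) 1
          * fun x => gammaMeasure (N:ℝ) 1 (Prod.mk x ⁻¹' {p : ℝ × ℝ | z ≤ p.1 * p.2})) x
        = ∫⁻ x in Ioi (0:ℝ), (gammaPDF (N:ℝ) 1
          * fun x => gammaMeasure (N:ℝ) 1 (Prod.mk x ⁻¹' {p : ℝ × ℝ | z ≤ p.1 * p.2})) x := by
      rw [← lintegral_add_compl _ measurableSet_Ioi (μ := volume)]
      have hcompl : (Ioi (0:ℝ))ᶜ = Iic 0 := compl_Ioi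
      rw [hcompl]
      have hIic : ∫⁻ x in Iic (0:ℝ), (gammaPDF (N:ℝ) 1
          * fun x => gammaMeasure (N:ℝ) 1 (Prod.mk x ⁻¹' {p : ℝ × ℝ | z ≤ p.1 * p.2})) x = 0 := by
        have hz0 : ∀ x ∈ Iio (0:ℝ), (gammaPDF (N:ℝ) 1
            * fun x => gammaMeasure (N:ℝ) 1 (Prod.mk x ⁻¹' {p : ℝ × ℝ | z ≤ p.1 * p.2})) x
            = (fun _ => (0:ℝ≥0∞)) x := by
          intro x hx
          simp only [Pi.mul_apply]
          rw [gammaPDF_of_neg hx, zero_mul]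
        rw [← restrict_Iio_eq_restrict_Iic,
          setLIntegral_congr_fun measurableSet_Iio hz0, lintegral_zero]
      rw [hIic, add_zero]
    rw [hsplit]
    have hptwise : ∀ x ∈ Ioi (0:ℝ), (gammaPDF (N:ℝ) 1
          * fun x => gammaMeasure (N:ℝ) 1 (Prod.mk x ⁻¹' {p : ℝ × ℝ | z ≤ p.1 * p.2})) x
        = ENNReal.ofReal (f x) := by
      intro x hx
      have hx0 : (0:ℝ) < x := hx
      have hpre : Prod.mk x ⁻¹' {p : ℝ × ℝ | z ≤ p.1 * p.2} = Ici (z/x) := by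
        ext y
        simp only [Set.mem_preimage, Set.mem_setOf_eq, Set.mem_Ici]
        rw [div_le_iff₀ hx0]
        constructor <;> intro h <;> linarith [h, mul_comm x y]
      show gammaPDF (N:ℝ) 1 x * gammaMeasure (N:ℝ) 1 _ = _
      rw [hpre, gammaMeasure_Ici hN (div_pos hz hx0), gammaPDF,
        gammaPDFReal_eq_pos hN hx0, ← ENNReal.ofReal_mul (by positivity)]
      congr 1
      rw [hfdef]
      simp only
      rw [Finset.mul_sum, Finset.mul_sum]
      refine Finset.sum_congr rfl fun p hp => ?_
      have hpN : p ≤ N - 1 := by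
        have := Finset.mem_range.mp hp; omega
      have hfacp : (0:ℝ) < (p.factorial : ℝ) := Nat.cast_pos.mpr (Nat.factorial_pos _)
      have hxpow : x ^ (N-1-p) = x ^ (N-1) / x ^ p := pow_sub₀ x hx0.ne' hpN
      rw [hxpow, show (-(x + z/x)) = -x + -(z/x) by ring, Real.exp_add]
      field_simp
      ring_nf
      rw [mul_assoc, ← mul_pow, mul_inv_cancel₀ hx0.ne', one_pow, mul_one]
    rw [setLIntegral_congr_fun measurableSet_Ioi hptwise,
      ← ofReal_integral_eq_lintegral_ofReal hfint ?hnn]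
    case hnn =>
      filter_upwards [ae_restrict_mem measurableSet_Ioi] with x hx
      have hx0 : (0:ℝ) < x := hx
      have : (0:ℝ) ≤ f x := by
        refine Finset.sum_nonneg fun p _ => ?_
        positivity
      simpa using this
    congr 1
    rw [hfdef]
    simp only
    rw [MeasureTheory.integral_finset_sum _
      (fun p _ => (integrable_kernel (N-1-p) z hz.le).const_mul _)]
    have hterm : ∀ p ∈ Finset.range N,
        ∫ x in Ioi (0:ℝ), z ^ p / ((p.factorial : ℝ) * ((N-1).factorial : ℝ))
          * (x ^ (N-1-p) * Real.exp (-(x + z/x)))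
        = 2 / ((N-1).factorial : ℝ) * (c ^ (N+p) * besselK ((N:ℝ)-(p:ℝ)) (2*c)
            / (p.factorial : ℝ)) := by
      intro p hp
      have hpN : p < N := Finset.mem_range.mp hp
      rw [MeasureTheory.integral_const_mul]
      rw [show z = c^2 from hcz.symm, integral_besselK (N-1-p) hc0]
      have he1 : N - 1 - p + 1 = N - p := by omega
      have he2 : ((N-1-p : ℕ) : ℝ) + 1 = (N:ℝ) - (p:ℝ) := by
        have : (N-1-p : ℕ) = N - (p+1) := by omega
        rw [this, Nat.cast_sub (by omega)]
        push_cast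
        ring
      rw [he1, he2]
      have he3 : (c^2) ^ p * c ^ (N - p) = c ^ (N + p) := by
        rw [← pow_mul, ← pow_add]
        congr 1
        omega
      have hfacp : (0:ℝ) < (p.factorial : ℝ) := Nat.cast_pos.mpr (Nat.factorial_pos _)
      field_simp
      rw [← he3]
      ring
    rw [Finset.sum_congr rfl hterm, hSdef, Finset.mul_sum]
  -- conclude
  have hms : MeasurableSet {ω | z ≤ X ω * Y ω} :=
    measurableSet_le measurable_const (hXm.mul hYm)
  have hcompl : {ω | X ω * Y ω < z} = {ω | z ≤ X ω * Y ω}ᶜ := by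
    ext ω; simp [not_le]
  rw [hcompl, measure_compl hms (measure_ne_top μ _), measure_univ, key]
  rw [ENNReal.ofReal_sub _ hS0, ENNReal.ofReal_one]
end

section
/- For any positive integer N and any b > 0, ∫₀^∞ z^{N-1} ln(z) K₀(2√(bz)) dz = ((N-1)!)²/(2 b^N) · (2ψ(N) - ln b), where K₀ is the modified Bessel function of the second kind of order 0 and ψ is the digamma function. -/
open Real Set MeasureTheory

/-- The digamma function at a positive integer: `ψ(N) = -γ_E + Σ_{k=1}^{N-1} 1/k`. -/
noncomputable def digammaNat (N : ℕ) : ℝ :=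
  -Real.eulerMascheroniConstant + ∑ k ∈ Finset.range (N - 1), (1 : ℝ) / (k + 1)

local notation "γ" => Real.eulerMascheroniConstant

lemma abslog_le (t : ℝ) (ht : 0 < t) : |Real.log t| ≤ 2 * (Real.sqrt t + (Real.sqrt t)⁻¹) := by
  have hst : 0 < Real.sqrt t := Real.sqrt_pos.mpr ht
  rcases le_or_gt 1 t with h | h
  · rw [abs_of_nonneg (Real.log_nonneg h)]
    have : Real.log t = 2 * Real.log (Real.sqrt t) := by
      rw [Real.log_sqrt ht.le]; ring
    rw [this]
    have h2 : Real.log (Real.sqrt t) ≤ Real.sqrt t - 1 := Real.log_le_sub_one_of_pos hst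
    nlinarith [hst.le, inv_pos.mpr hst]
  · rw [abs_of_nonpos (Real.log_nonpos ht.le h.le), ← Real.log_inv]
    have hst' : 0 < (Real.sqrt t)⁻¹ := inv_pos.mpr hst
    have : Real.log t⁻¹ = 2 * Real.log ((Real.sqrt t)⁻¹) := by
      rw [Real.log_inv, Real.log_inv, Real.log_sqrt ht.le]; ring
    rw [this]
    have h2 : Real.log ((Real.sqrt t)⁻¹) ≤ (Real.sqrt t)⁻¹ - 1 := Real.log_le_sub_one_of_pos hst'
    nlinarith [hst.le]

lemma int_pow_exp (n : ℕ) : IntegrableOn (fun t : ℝ => t ^ n * Real.exp (-t)) (Ioi 0) := by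
  have h := Real.GammaIntegral_convergent (s := (n : ℝ) + 1) (by positivity)
  refine (h.congr_fun (fun t ht => ?_) measurableSet_Ioi)
  rw [add_sub_cancel_right]
  beta_reduce
  rw [Real.rpow_natCast, mul_comm]

lemma int_rpow_exp {a : ℝ} (ha : -1 < a) : IntegrableOn (fun t : ℝ => t ^ a * Real.exp (-t)) (Ioi 0) := by
  have h := Real.GammaIntegral_convergent (s := a + 1) (by linarith)
  refine (h.congr_fun (fun t ht => ?_) measurableSet_Ioi)
  rw [add_sub_cancel_right, mul_comm]

lemma int_pow_abslog_exp (n : ℕ) :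
    IntegrableOn (fun t : ℝ => t ^ n * |Real.log t| * Real.exp (-t)) (Ioi 0) := by
  have h1 := int_rpow_exp (a := (n : ℝ) + 1/2) (by linarith [Nat.cast_nonneg (α:=ℝ) n])
  have h2 := int_rpow_exp (a := (n : ℝ) - 1/2) (by
    have : (0:ℝ) ≤ n := Nat.cast_nonneg n
    linarith)
  have hg : IntegrableOn (fun t : ℝ =>
      2 * (t ^ ((n : ℝ) + 1/2) * Real.exp (-t) + t ^ ((n : ℝ) - 1/2) * Real.exp (-t))) (Ioi 0) :=
    ((h1.add h2).const_mul 2)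
  refine Integrable.mono' hg ?_ ?_
  · apply Measurable.aestronglyMeasurable
    exact ((measurable_id.pow_const n).mul (Real.measurable_log.abs)).mul
      (Real.measurable_exp.comp measurable_neg)
  · filter_upwards [ae_restrict_mem measurableSet_Ioi] with t ht
    have ht : (0:ℝ) < t := ht
    have hb := abslog_le t ht
    rw [Real.norm_eq_abs, abs_mul, abs_mul, abs_of_nonneg (pow_nonneg ht.le n),
      abs_of_nonneg (Real.exp_nonneg _), abs_abs]
    have hsq : Real.sqrt t = t ^ (1/2 : ℝ) := Real.sqrt_eq_rpow t
    have h1' : t ^ n * Real.sqrt t = t ^ ((n:ℝ) + 1/2) := by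
      rw [hsq, ← Real.rpow_natCast t n, ← Real.rpow_add ht]
    have h2' : t ^ n * (Real.sqrt t)⁻¹ = t ^ ((n:ℝ) - 1/2) := by
      rw [hsq, ← Real.rpow_neg ht.le, ← Real.rpow_natCast t n, ← Real.rpow_add ht]
      ring_nf
    have hexp : 0 < Real.exp (-t) := Real.exp_pos _
    calc t ^ n * |Real.log t| * Real.exp (-t)
        ≤ t ^ n * (2 * (Real.sqrt t + (Real.sqrt t)⁻¹)) * Real.exp (-t) := by
          apply mul_le_mul_of_nonneg_right _ hexp.le
          exact mul_le_mul_of_nonneg_left hb (pow_nonneg ht.le n)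
      _ = 2 * (t ^ ((n : ℝ) + 1/2) * Real.exp (-t) + t ^ ((n : ℝ) - 1/2) * Real.exp (-t)) := by
          rw [← h1', ← h2']; ring

lemma int_pow_log_exp (n : ℕ) :
    IntegrableOn (fun t : ℝ => t ^ n * Real.log t * Real.exp (-t)) (Ioi 0) := by
  refine Integrable.mono' (int_pow_abslog_exp n) ?_ ?_
  · apply Measurable.aestronglyMeasurable
    exact ((measurable_id.pow_const n).mul Real.measurable_log).mul
      (Real.measurable_exp.comp measurable_neg)
  · filter_upwards [ae_restrict_mem measurableSet_Ioi] with t ht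
    have ht : (0:ℝ) < t := ht
    rw [Real.norm_eq_abs, abs_mul, abs_mul, abs_of_nonneg (pow_nonneg ht.le n),
      abs_of_nonneg (Real.exp_nonneg _)]

lemma integral_pow_exp (n : ℕ) :
    ∫ t in Ioi (0:ℝ), t ^ n * Real.exp (-t) = n.factorial := by
  have h := Real.Gamma_eq_integral (s := (n:ℝ) + 1) (by positivity)
  rw [show ((n:ℝ) + 1) = ((n : ℕ) + 1 : ℝ) by push_cast; ring, Real.Gamma_nat_eq_factorial,
    show (((n:ℕ):ℝ) + 1 - 1) = ((n:ℕ):ℝ) by ring] at h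
  rw [h]
  refine setIntegral_congr_fun measurableSet_Ioi fun t ht => ?_
  rw [Real.rpow_natCast, mul_comm]

lemma integral_pow_log_exp (n : ℕ) :
    ∫ t in Ioi (0:ℝ), t ^ n * Real.log t * Real.exp (-t)
      = n.factorial * (-γ + harmonic n) := by
  have hre : (0:ℝ) < ((n:ℂ) + 1).re := by
    simp only [Complex.add_re, Complex.natCast_re, Complex.one_re]
    positivity
  have h1 := Complex.hasDerivAt_GammaIntegral (s := (n:ℂ) + 1) hre
  have h2 : HasDerivAt Complex.Gamma ((n.factorial : ℂ) * (-(γ:ℂ) + (harmonic n : ℂ))) ((n:ℂ) + 1) := by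
    exact_mod_cast Complex.hasDerivAt_Gamma_nat n
  have heq : Complex.GammaIntegral =ᶠ[nhds ((n:ℂ)+1)] Complex.Gamma := by
    have hopen : IsOpen {s : ℂ | 0 < s.re} := isOpen_lt continuous_const Complex.continuous_re
    filter_upwards [hopen.mem_nhds hre] with s hs
    exact (Complex.Gamma_eq_integral hs).symm
  have h2' : HasDerivAt Complex.GammaIntegral ((n.factorial : ℂ) * (-(γ:ℂ) + (harmonic n : ℂ))) ((n:ℂ) + 1) :=
    h2.congr_of_eventuallyEq heq
  have hC : (∫ t : ℝ in Ioi 0, (t:ℂ) ^ ((n:ℂ) + 1 - 1) * (Real.log t * Real.exp (-t)))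
      = (n.factorial : ℂ) * (-(γ:ℂ) + (harmonic n : ℂ)) := h1.unique h2'
  have hC2 : (∫ t : ℝ in Ioi 0, (t:ℂ) ^ ((n:ℂ) + 1 - 1) * (Real.log t * Real.exp (-t)))
      = ((∫ t in Ioi (0:ℝ), t ^ n * Real.log t * Real.exp (-t) : ℝ) : ℂ) := by
    have cc : ∀ r : ℝ, Complex.ofReal r = @RCLike.ofReal ℂ _ r := fun r => rfl
    rw [cc, ← integral_ofReal]
    refine setIntegral_congr_fun measurableSet_Ioi fun t ht => ?_
    rw [add_sub_cancel_right, Complex.cpow_natCast]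
    push_cast
    norm_cast
    rw [mul_assoc]
    exact cc _
  rw [hC2] at hC
  exact_mod_cast hC


-- the shifted integrand: t^n (log t - log c) e^{-t}
lemma int_pow_logsub_exp (n : ℕ) (r : ℝ) :
    IntegrableOn (fun t : ℝ => t ^ n * (Real.log t - r) * Real.exp (-t)) (Ioi 0) := by
  have : (fun t : ℝ => t ^ n * (Real.log t - r) * Real.exp (-t))
      = fun t : ℝ => t ^ n * Real.log t * Real.exp (-t) - r * (t ^ n * Real.exp (-t)) := by
    funext t; ring
  rw [this]
  exact (int_pow_log_exp n).sub ((int_pow_exp n).const_mul r)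

lemma scaled_eq (n : ℕ) {c : ℝ} (hc : 0 < c) (G : ℝ → ℝ) :
    ∫ z in Ioi (0:ℝ), G (c * z) = c⁻¹ * ∫ t in Ioi (0:ℝ), G t := by
  have := integral_comp_mul_left_Ioi G 0 hc
  rw [mul_zero] at this
  rw [this, smul_eq_mul]

lemma integral_pow_log_exp_scaled (n : ℕ) {c : ℝ} (hc : 0 < c) :
    ∫ z in Ioi (0:ℝ), z ^ n * Real.log z * Real.exp (-(c*z))
      = n.factorial / c ^ (n+1) * (-γ + harmonic n - Real.log c) := by
  set G : ℝ → ℝ := fun t => t ^ n * (Real.log t - Real.log c) * Real.exp (-t) with hG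
  have key : ∀ z ∈ Ioi (0:ℝ), z ^ n * Real.log z * Real.exp (-(c*z)) = (c ^ n)⁻¹ * G (c * z) := by
    intro z hz
    have hz : (0:ℝ) < z := hz
    simp only [hG]
    rw [Real.log_mul hc.ne' hz.ne']
    rw [mul_pow]
    field_simp
    ring
  rw [setIntegral_congr_fun measurableSet_Ioi key, integral_const_mul, scaled_eq n hc G]
  have : ∫ t in Ioi (0:ℝ), G t
      = (∫ t in Ioi (0:ℝ), t ^ n * Real.log t * Real.exp (-t))
        - Real.log c * ∫ t in Ioi (0:ℝ), t ^ n * Real.exp (-t) := by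
    rw [← integral_const_mul, ← integral_sub (int_pow_log_exp n) ((int_pow_exp n).const_mul _)]
    refine setIntegral_congr_fun measurableSet_Ioi fun t ht => ?_
    simp only [hG]; ring
  rw [this, integral_pow_log_exp, integral_pow_exp]
  rw [pow_succ]
  field_simp

lemma int_pow_log_exp_scaled (n : ℕ) {c : ℝ} (hc : 0 < c) :
    IntegrableOn (fun z : ℝ => z ^ n * Real.log z * Real.exp (-(c*z))) (Ioi 0) := by
  set G : ℝ → ℝ := fun t => t ^ n * (Real.log t - Real.log c) * Real.exp (-t) with hG
  have h1 : IntegrableOn (fun z : ℝ => G (c * z)) (Ioi 0) := by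
    have := (integrableOn_Ioi_comp_mul_left_iff G 0 hc)
    rw [mul_zero] at this
    exact this.mpr (int_pow_logsub_exp n (Real.log c))
  have h2 : IntegrableOn (fun z : ℝ => (c ^ n)⁻¹ * G (c * z)) (Ioi 0) := h1.const_mul _
  refine h2.congr_fun (fun z hz => ?_) measurableSet_Ioi
  have hz : (0:ℝ) < z := hz
  simp only [hG]
  rw [Real.log_mul hc.ne' hz.ne', mul_pow]
  field_simp
  ring

lemma integral_pow_abslog_exp_scaled_le (n : ℕ) {c : ℝ} (hc : 0 < c) :
    ∫ z in Ioi (0:ℝ), z ^ n * |Real.log z| * Real.exp (-(c*z))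
      ≤ (1 / c ^ (n+1)) * ((∫ t in Ioi (0:ℝ), t ^ n * |Real.log t| * Real.exp (-t))
          + n.factorial * |Real.log c|) := by
  set G : ℝ → ℝ := fun t => t ^ n * |Real.log t - Real.log c| * Real.exp (-t) with hG
  have key : ∀ z ∈ Ioi (0:ℝ), z ^ n * |Real.log z| * Real.exp (-(c*z)) = (c ^ n)⁻¹ * G (c * z) := by
    intro z hz
    have hz : (0:ℝ) < z := hz
    simp only [hG]
    rw [Real.log_mul hc.ne' hz.ne', mul_pow, show Real.log c + Real.log z - Real.log c
      = Real.log z by ring]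
    field_simp
  rw [setIntegral_congr_fun measurableSet_Ioi key, integral_const_mul, scaled_eq n hc G]
  have hGint : IntegrableOn G (Ioi 0) := by
    have hbound : IntegrableOn (fun t : ℝ => t ^ n * |Real.log t| * Real.exp (-t)
        + |Real.log c| * (t ^ n * Real.exp (-t))) (Ioi 0) :=
      (int_pow_abslog_exp n).add ((int_pow_exp n).const_mul _)
    refine Integrable.mono' hbound ?_ ?_
    · apply Measurable.aestronglyMeasurable
      exact ((measurable_id.pow_const n).mul ((Real.measurable_log.sub measurable_const).abs)).mul
        (Real.measurable_exp.comp measurable_neg)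
    · filter_upwards [ae_restrict_mem measurableSet_Ioi] with t ht
      have ht : (0:ℝ) < t := ht
      simp only [hG]
      rw [Real.norm_eq_abs, abs_mul, abs_mul, abs_of_nonneg (pow_nonneg ht.le n),
        abs_of_nonneg (Real.exp_nonneg _), abs_abs]
      have htri : |Real.log t - Real.log c| ≤ |Real.log t| + |Real.log c| := abs_sub _ _
      nlinarith [pow_nonneg ht.le n, Real.exp_nonneg (-t), abs_nonneg (Real.log t),
        abs_nonneg (Real.log c), mul_le_mul_of_nonneg_left htri (pow_nonneg ht.le n)]
  have hle : ∫ t in Ioi (0:ℝ), G t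
      ≤ (∫ t in Ioi (0:ℝ), t ^ n * |Real.log t| * Real.exp (-t))
        + |Real.log c| * (n.factorial : ℝ) := by
    rw [← integral_pow_exp n, ← integral_const_mul,
      ← integral_add (int_pow_abslog_exp n) ((int_pow_exp n).const_mul _)]
    refine setIntegral_mono_on hGint ((int_pow_abslog_exp n).add ((int_pow_exp n).const_mul _))
      measurableSet_Ioi fun t ht => ?_
    have ht : (0:ℝ) < t := ht
    simp only [hG]
    have htri : |Real.log t - Real.log c| ≤ |Real.log t| + |Real.log c| := abs_sub _ _
    nlinarith [pow_nonneg ht.le n, Real.exp_nonneg (-t),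
      mul_le_mul_of_nonneg_left htri (pow_nonneg ht.le n)]
  have hpos : (0:ℝ) < c ^ (n+1) := pow_pos hc _
  calc (c ^ n)⁻¹ * (c⁻¹ * ∫ t in Ioi (0:ℝ), G t)
      ≤ (c ^ n)⁻¹ * (c⁻¹ * ((∫ t in Ioi (0:ℝ), t ^ n * |Real.log t| * Real.exp (-t))
          + |Real.log c| * (n.factorial : ℝ))) := by
        apply mul_le_mul_of_nonneg_left _ (by positivity)
        exact mul_le_mul_of_nonneg_left hle (by positivity)
    _ = (1 / c ^ (n+1)) * ((∫ t in Ioi (0:ℝ), t ^ n * |Real.log t| * Real.exp (-t))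
          + n.factorial * |Real.log c|) := by
        rw [pow_succ]
        field_simp


lemma integrable_exp_cosh {y : ℝ} (hy : 0 < y) :
    IntegrableOn (fun t : ℝ => Real.exp (-y * Real.cosh t)) (Ioi 0) := by
  refine Integrable.mono' (g := fun t : ℝ => Real.exp (-(y/2) * t))
    (exp_neg_integrableOn_Ioi 0 (by positivity)) ?_ ?_
  · apply Measurable.aestronglyMeasurable
    exact Real.measurable_exp.comp ((measurable_const.mul Real.measurable_cosh))
  · filter_upwards [ae_restrict_mem measurableSet_Ioi] with t ht
    have ht : (0:ℝ) < t := ht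
    rw [Real.norm_eq_abs, abs_of_nonneg (Real.exp_nonneg _)]
    apply Real.exp_le_exp.mpr
    have hcosh : t / 2 ≤ Real.cosh t := by
      have h1 : Real.sinh t < Real.cosh t := Real.sinh_lt_cosh t
      have h2 : t / 2 ≤ Real.sinh t := by
        rw [Real.sinh_eq]
        have h4 := Real.add_one_le_exp t
        have h3 : Real.exp (-t) ≤ 1 := Real.exp_le_one_iff.mpr (by linarith)
        linarith
      linarith
    nlinarith

lemma cosh_combine {x t : ℝ} (hx : 0 < x) :
    -(Real.sqrt x * Real.exp t) - x / (Real.sqrt x * Real.exp t)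
      = -(2 * Real.sqrt x) * Real.cosh t := by
  have hsx : 0 < Real.sqrt x := Real.sqrt_pos.mpr hx
  have hexp : 0 < Real.exp t := Real.exp_pos t
  have : x / (Real.sqrt x * Real.exp t) = Real.sqrt x * Real.exp (-t) := by
    rw [Real.exp_neg, div_mul_eq_div_div, Real.div_sqrt, div_eq_mul_inv]
  rw [this, Real.cosh_eq]
  ring

section aux1
variable {x : ℝ} (hx : 0 < x)
include hx

lemma besselK_img1 : (fun t : ℝ => Real.sqrt x * Real.exp t) '' (Ioi 0) = Ioi (Real.sqrt x) := by
  have hsx : 0 < Real.sqrt x := Real.sqrt_pos.mpr hx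
  ext u
  constructor
  · rintro ⟨t, ht, rfl⟩
    have ht : (0:ℝ) < t := ht
    have h1 : (1:ℝ) < Real.exp t := by
      rw [← Real.exp_zero]; exact Real.exp_lt_exp.mpr ht
    have := mul_lt_mul_of_pos_left h1 hsx
    simpa using this
  · intro hu
    have hu : Real.sqrt x < u := hu
    have hupos : 0 < u := hsx.trans hu
    refine ⟨Real.log (u / Real.sqrt x), Real.log_pos ((one_lt_div hsx).mpr hu), ?_⟩
    show Real.sqrt x * Real.exp (Real.log (u / Real.sqrt x)) = u
    rw [Real.exp_log (by positivity), mul_div_cancel₀ _ hsx.ne']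

omit hx in
lemma besselK_deriv1 : ∀ t ∈ Ioi (0:ℝ), HasDerivWithinAt (fun t : ℝ => Real.sqrt x * Real.exp t)
    (Real.sqrt x * Real.exp t) (Ioi 0) t := fun t _ =>
  ((Real.hasDerivAt_exp t).const_mul (Real.sqrt x)).hasDerivWithinAt

lemma besselK_inj1 : InjOn (fun t : ℝ => Real.sqrt x * Real.exp t) (Ioi 0) := by
  have hsx : 0 < Real.sqrt x := Real.sqrt_pos.mpr hx
  intro a _ b _ h
  exact Real.exp_injective (mul_left_cancel₀ hsx.ne' h)

lemma besselK_ptwise1 : ∀ t ∈ Ioi (0:ℝ),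
    |Real.sqrt x * Real.exp t| • ((fun u : ℝ => Real.exp (-u - x/u) / u) (Real.sqrt x * Real.exp t))
      = Real.exp (-(2 * Real.sqrt x) * Real.cosh t) := by
  intro t _
  have hsx : 0 < Real.sqrt x := Real.sqrt_pos.mpr hx
  have hexp : 0 < Real.exp t := Real.exp_pos t
  have he : 0 < Real.sqrt x * Real.exp t := by positivity
  rw [smul_eq_mul, abs_of_pos he, ← cosh_combine (t := t) hx]
  field_simp

lemma besselK_aux1 :
    (∫ u in Ioi (Real.sqrt x), Real.exp (-u - x/u) / u)
      = ∫ t in Ioi (0:ℝ), Real.exp (-(2 * Real.sqrt x) * Real.cosh t) := by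
  rw [← besselK_img1 hx, integral_image_eq_integral_abs_deriv_smul measurableSet_Ioi
    (besselK_deriv1) (besselK_inj1 hx)]
  exact setIntegral_congr_fun measurableSet_Ioi (besselK_ptwise1 hx)

lemma besselK_int1 : IntegrableOn (fun u : ℝ => Real.exp (-u - x/u) / u) (Ioi (Real.sqrt x)) := by
  rw [← besselK_img1 hx, integrableOn_image_iff_integrableOn_abs_deriv_smul measurableSet_Ioi
    (besselK_deriv1) (besselK_inj1 hx)]
  exact ((integrable_exp_cosh (y := 2 * Real.sqrt x) (by have := Real.sqrt_pos.mpr hx; positivity)).congr_fun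
    (fun t ht => (besselK_ptwise1 hx t ht).symm) measurableSet_Ioi)

end aux1

section aux2
variable {x : ℝ} (hx : 0 < x)
include hx

omit hx in
lemma exp_neg_hasDerivAt (t : ℝ) :
    HasDerivAt (fun t : ℝ => Real.exp (-t)) (Real.exp (-t) * (-1)) t :=
  (Real.hasDerivAt_exp (-t)).comp t (hasDerivAt_neg t)

lemma besselK_img2 : (fun t : ℝ => Real.sqrt x * Real.exp (-t)) '' (Ioi 0) = Ioo 0 (Real.sqrt x) := by
  have hsx : 0 < Real.sqrt x := Real.sqrt_pos.mpr hx
  ext u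
  constructor
  · rintro ⟨t, ht, rfl⟩
    have ht : (0:ℝ) < t := ht
    have h1 : Real.exp (-t) < 1 := Real.exp_lt_one_iff.mpr (by linarith)
    refine ⟨by positivity, ?_⟩
    have := mul_lt_mul_of_pos_left h1 hsx
    simpa using this
  · rintro ⟨hu0, hu⟩
    refine ⟨Real.log (Real.sqrt x / u), Real.log_pos ((one_lt_div hu0).mpr hu), ?_⟩
    show Real.sqrt x * Real.exp (-Real.log (Real.sqrt x / u)) = u
    rw [Real.exp_neg, Real.exp_log (by positivity)]
    field_simp

omit hx in
lemma besselK_deriv2 : ∀ t ∈ Ioi (0:ℝ),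
    HasDerivWithinAt (fun t : ℝ => Real.sqrt x * Real.exp (-t))
    (Real.sqrt x * (Real.exp (-t) * (-1))) (Ioi 0) t := fun t _ =>
  ((exp_neg_hasDerivAt t).const_mul (Real.sqrt x)).hasDerivWithinAt

lemma besselK_inj2 : InjOn (fun t : ℝ => Real.sqrt x * Real.exp (-t)) (Ioi 0) := by
  have hsx : 0 < Real.sqrt x := Real.sqrt_pos.mpr hx
  intro a _ b _ h
  exact neg_injective (Real.exp_injective (mul_left_cancel₀ hsx.ne' h))

lemma besselK_ptwise2 : ∀ t ∈ Ioi (0:ℝ),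
    |Real.sqrt x * (Real.exp (-t) * (-1))| •
      ((fun u : ℝ => Real.exp (-u - x/u) / u) (Real.sqrt x * Real.exp (-t)))
      = Real.exp (-(2 * Real.sqrt x) * Real.cosh t) := by
  intro t _
  have hsx : 0 < Real.sqrt x := Real.sqrt_pos.mpr hx
  have hexp : 0 < Real.exp (-t) := Real.exp_pos _
  have he : 0 < Real.sqrt x * Real.exp (-t) := by positivity
  have habs : |Real.sqrt x * (Real.exp (-t) * (-1))| = Real.sqrt x * Real.exp (-t) := by
    rw [abs_of_nonpos (by nlinarith)]; ring
  have hcc := cosh_combine (t := -t) hx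
  rw [Real.cosh_neg] at hcc
  rw [smul_eq_mul, habs, ← hcc]
  field_simp

lemma besselK_aux2 :
    (∫ u in Ioo 0 (Real.sqrt x), Real.exp (-u - x/u) / u)
      = ∫ t in Ioi (0:ℝ), Real.exp (-(2 * Real.sqrt x) * Real.cosh t) := by
  rw [← besselK_img2 hx, integral_image_eq_integral_abs_deriv_smul measurableSet_Ioi
    (besselK_deriv2) (besselK_inj2 hx)]
  exact setIntegral_congr_fun measurableSet_Ioi (besselK_ptwise2 hx)

lemma besselK_int2 : IntegrableOn (fun u : ℝ => Real.exp (-u - x/u) / u) (Ioo 0 (Real.sqrt x)) := by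
  rw [← besselK_img2 hx, integrableOn_image_iff_integrableOn_abs_deriv_smul measurableSet_Ioi
    (besselK_deriv2) (besselK_inj2 hx)]
  exact ((integrable_exp_cosh (y := 2 * Real.sqrt x)
      (by have := Real.sqrt_pos.mpr hx; positivity)).congr_fun
    (fun t ht => (besselK_ptwise2 hx t ht).symm) measurableSet_Ioi)

end aux2

lemma besselK_eq {x : ℝ} (hx : 0 < x) :
    besselK 0 (2 * Real.sqrt x) = (1/2) * ∫ u in Ioi (0:ℝ), Real.exp (-u - x/u) / u := by
  have hsx : 0 < Real.sqrt x := Real.sqrt_pos.mpr hx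
  have hB : besselK 0 (2 * Real.sqrt x)
      = ∫ t in Ioi (0:ℝ), Real.exp (-(2 * Real.sqrt x) * Real.cosh t) := by
    unfold besselK
    refine setIntegral_congr_fun measurableSet_Ioi fun t _ => ?_
    rw [zero_mul, Real.cosh_zero, mul_one]
  have hsplit : (∫ u in Ioi (0:ℝ), Real.exp (-u - x/u) / u)
      = (∫ u in Ioc 0 (Real.sqrt x), Real.exp (-u - x/u) / u)
        + ∫ u in Ioi (Real.sqrt x), Real.exp (-u - x/u) / u := by
    rw [← setIntegral_union (Set.Ioc_disjoint_Ioi le_rfl) measurableSet_Ioi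
      ((integrableOn_Ioc_iff_integrableOn_Ioo).mpr (besselK_int2 hx)) (besselK_int1 hx),
      Set.Ioc_union_Ioi_eq_Ioi hsx.le]
  rw [hsplit, integral_Ioc_eq_integral_Ioo, besselK_aux2 hx, besselK_aux1 hx, hB]
  ring




/-- `∫₀^∞ z^{N-1} ln z K₀(2√(bz)) dz = ((N-1)!)²/(2b^N) · (2ψ(N) - ln b)`. -/
theorem stmt10 (N : ℕ) (hN : 1 ≤ N) (b : ℝ) (hb : 0 < b) :
    ∫ z in Ioi (0:ℝ), z ^ (N - 1) * Real.log z * besselK 0 (2 * Real.sqrt (b * z)) =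
      ((Nat.factorial (N - 1) : ℝ)) ^ 2 / (2 * b ^ N) * (2 * digammaNat N - Real.log b) := by
  obtain ⟨n, rfl⟩ : ∃ n, N = n + 1 := ⟨N - 1, (Nat.succ_pred_eq_of_pos hN).symm⟩
  simp only [Nat.add_sub_cancel]
  set ψ : ℝ := -γ + (harmonic n : ℝ) with hψ
  have hdig : digammaNat (n + 1) = ψ := by
    rw [digammaNat, hψ, Nat.add_sub_cancel]
    congr 1
    rw [harmonic]
    push_cast
    refine Finset.sum_congr rfl fun k _ => ?_
    rw [one_div]
  set Φ : ℝ → ℝ → ℝ := fun z u => z ^ n * Real.log z * (Real.exp (-u - b*z/u) / u) with hΦ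
  set μ : Measure ℝ := volume.restrict (Ioi 0) with hμ
  set A : ℝ := ∫ t in Ioi (0:ℝ), t ^ n * |Real.log t| * Real.exp (-t) with hA
  -- measurability
  have hmeas : AEStronglyMeasurable (Function.uncurry Φ) (μ.prod μ) := by
    apply Measurable.aestronglyMeasurable
    apply Measurable.mul
    · exact (measurable_fst.pow_const n).mul (Real.measurable_log.comp measurable_fst)
    · exact (Real.measurable_exp.comp
        (measurable_snd.neg.sub ((measurable_fst.const_mul b).div measurable_snd))).div
        measurable_snd
  -- exp splitting
  have hexp_split : ∀ (u z : ℝ), u ≠ 0 →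
      Real.exp (-u - b*z/u) = Real.exp (-u) * Real.exp (-(b/u*z)) := by
    intro u z hu
    rw [← Real.exp_add]
    congr 1
    field_simp
    ring
  -- a.e. slices integrable
  have hslice : ∀ᵐ u ∂μ, Integrable (fun z => Φ z u) μ := by
    rw [hμ, ae_restrict_iff' measurableSet_Ioi]
    filter_upwards with u hu
    have hu : (0:ℝ) < u := hu
    have h1 : IntegrableOn
        (fun z : ℝ => (Real.exp (-u)/u) * (z ^ n * Real.log z * Real.exp (-(b/u*z))))
        (Ioi 0) :=
      (int_pow_log_exp_scaled n (div_pos hb hu)).const_mul _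
    refine h1.congr_fun (fun z hz => ?_) measurableSet_Ioi
    rw [hΦ]
    simp only
    rw [hexp_split u z hu.ne']
    field_simp
  -- pointwise formula for the norm integral
  have hnorm_eq : ∀ u : ℝ, 0 < u → (∫ z, ‖Φ z u‖ ∂μ)
      = (Real.exp (-u)/u) * ∫ z in Ioi (0:ℝ), z ^ n * |Real.log z| * Real.exp (-(b/u*z)) := by
    intro u hu
    rw [hμ, ← integral_const_mul]
    refine setIntegral_congr_fun measurableSet_Ioi fun z hz => ?_
    have hz : (0:ℝ) < z := hz
    rw [hΦ]
    simp only
    rw [Real.norm_eq_abs, abs_mul, abs_mul, abs_of_nonneg (pow_nonneg hz.le n),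
      abs_of_nonneg (by positivity : (0:ℝ) ≤ Real.exp (-u - b*z/u) / u),
      hexp_split u z hu.ne']
    field_simp
  -- the dominating function
  set C1 : ℝ := (A + n.factorial * |Real.log b|) / b^(n+1) with hC1
  set C2 : ℝ := (n.factorial : ℝ) / b^(n+1) with hC2
  have hg0int : Integrable
      (fun u : ℝ => C1 * (u ^ n * Real.exp (-u)) + C2 * (u ^ n * |Real.log u| * Real.exp (-u)))
      μ :=
    ((int_pow_exp n).const_mul C1).add ((int_pow_abslog_exp n).const_mul C2)
  have hnormint : Integrable (fun u => ∫ z, ‖Φ z u‖ ∂μ) μ := by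
    refine Integrable.mono' hg0int ?_ ?_
    · exact (hmeas.norm.prod_swap).integral_prod_right'
    · rw [hμ, ae_restrict_iff' measurableSet_Ioi]
      filter_upwards with u hu
      have hu : (0:ℝ) < u := hu
      have hbu : 0 < b / u := div_pos hb hu
      have hnn : 0 ≤ ∫ z, ‖Φ z u‖ ∂μ := integral_nonneg fun z => norm_nonneg _
      rw [Real.norm_eq_abs, abs_of_nonneg hnn, hnorm_eq u hu]
      have step := integral_pow_abslog_exp_scaled_le n hbu
      have hlog : |Real.log (b/u)| ≤ |Real.log b| + |Real.log u| := by
        rw [Real.log_div hb.ne' hu.ne']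
        exact abs_sub _ _
      have hAnn : 0 ≤ A := by
        rw [hA]
        exact setIntegral_nonneg measurableSet_Ioi fun t ht =>
          mul_nonneg (mul_nonneg (pow_nonneg (le_of_lt ht) n) (abs_nonneg _)) (Real.exp_nonneg _)
      have hfac : (0:ℝ) ≤ n.factorial := Nat.cast_nonneg _
      have h2 : ∫ z in Ioi (0:ℝ), z ^ n * |Real.log z| * Real.exp (-(b/u*z))
          ≤ (1 / (b/u)^(n+1)) * (A + n.factorial * (|Real.log b| + |Real.log u|)) := by
        refine step.trans ?_
        rw [← hA]
        apply mul_le_mul_of_nonneg_left _ (by positivity)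
        have := mul_le_mul_of_nonneg_left hlog hfac
        linarith
      have hcoef : 0 ≤ Real.exp (-u) / u := by positivity
      refine (mul_le_mul_of_nonneg_left h2 hcoef).trans (le_of_eq ?_)
      rw [hC1, hC2]
      rw [div_pow b u (n+1)]
      field_simp
      ring
  have hFub : Integrable (Function.uncurry Φ) (μ.prod μ) :=
    (integrable_prod_iff' hmeas).mpr ⟨hslice, hnormint⟩
  -- rewrite via besselK_eq and pull the 1/2 out
  have hrw : ∫ z in Ioi (0:ℝ), z ^ n * Real.log z * besselK 0 (2 * Real.sqrt (b * z))
      = (1/2) * ∫ z, (∫ u, Φ z u ∂μ) ∂μ := by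
    rw [hμ, ← integral_const_mul]
    refine setIntegral_congr_fun measurableSet_Ioi fun z hz => ?_
    have hz : (0:ℝ) < z := hz
    have hJ : (∫ u, Φ z u ∂μ)
        = (z ^ n * Real.log z) * ∫ u in Ioi (0:ℝ), Real.exp (-u - b*z/u) / u := by
      rw [hμ, ← integral_const_mul]
    rw [besselK_eq (mul_pos hb hz), hJ]
    ring
  have hswap := integral_integral_swap (f := Φ) (μ := μ) (ν := μ) hFub
  rw [hrw, hswap]
  -- compute the inner integral
  have hinner : ∀ u : ℝ, 0 < u → (∫ z, Φ z u ∂μ)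
      = (n.factorial : ℝ)/b^(n+1) * ((ψ - Real.log b) * (u ^ n * Real.exp (-u))
          + u ^ n * Real.log u * Real.exp (-u)) := by
    intro u hu
    have hbu : 0 < b / u := div_pos hb hu
    have h1 : (∫ z, Φ z u ∂μ)
        = (Real.exp (-u)/u) * ∫ z in Ioi (0:ℝ), z ^ n * Real.log z * Real.exp (-(b/u*z)) := by
      rw [hμ, ← integral_const_mul]
      refine setIntegral_congr_fun measurableSet_Ioi fun z hz => ?_
      rw [hΦ]
      simp only
      rw [hexp_split u z hu.ne']
      field_simp
    rw [h1, integral_pow_log_exp_scaled n hbu, Real.log_div hb.ne' hu.ne']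
    rw [div_pow b u (n+1), hψ]
    have hun : (0:ℝ) < u^(n+1) := pow_pos hu _
    field_simp
    ring
  have houter : (∫ u, (∫ z, Φ z u ∂μ) ∂μ)
      = (n.factorial : ℝ)/b^(n+1) * ((ψ - Real.log b) * n.factorial
          + n.factorial * ψ) := by
    have : (∫ u, (∫ z, Φ z u ∂μ) ∂μ)
        = ∫ u in Ioi (0:ℝ), (n.factorial : ℝ)/b^(n+1) * ((ψ - Real.log b) * (u ^ n * Real.exp (-u))
            + u ^ n * Real.log u * Real.exp (-u)) := by
      rw [hμ]
      exact setIntegral_congr_fun measurableSet_Ioi fun u hu => hinner u hu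
    rw [this, integral_const_mul]
    congr 1
    rw [integral_add (((int_pow_exp n).const_mul _)) (int_pow_log_exp n), integral_const_mul,
      integral_pow_exp, integral_pow_log_exp, hψ]
  rw [houter, hdig]
  field_simp
  ring
end

section
/- Fix γ̄ > 0, Ω > 0 and positive integer N, and define g(τ) = ((1-τ)/ln 2)·[2ψ(N) + ln γ̄ + 2 ln Ω - ln((1-τ)/τ)] on (0,1). If γ̄Ω² e^{2ψ(N)} > 1, then g attains its maximum on (0,1) at the unique point τ* = 1/(1 + W(γ̄Ω² e^{2ψ(N)-1})), where W is the principal Lambert W function. -/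
open Real Set

lemma key_le (Wv u : ℝ) (hWv : 0 < Wv) (hu : 0 < u) :
    u * (1 + Wv + Real.log Wv - Real.log u) ≤ Wv * (1 + u) := by
  have ht : 0 < Wv / u := div_pos hWv hu
  have h1 : Real.log (Wv / u) ≤ Wv / u - 1 := Real.log_le_sub_one_of_pos ht
  have hlog : Real.log (Wv / u) = Real.log Wv - Real.log u := Real.log_div hWv.ne' hu.ne'
  have h2 : u * Real.log (Wv / u) ≤ u * (Wv / u - 1) :=
    mul_le_mul_of_nonneg_left h1 hu.le
  have h3 : u * (Wv / u - 1) = Wv - u := by field_simp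
  nlinarith [h2, h3]

lemma key_lt (Wv u : ℝ) (hWv : 0 < Wv) (hu : 0 < u) (hne : u ≠ Wv) :
    u * (1 + Wv + Real.log Wv - Real.log u) < Wv * (1 + u) := by
  have ht : 0 < Wv / u := div_pos hWv hu
  have hne1 : Wv / u ≠ 1 := by
    intro h
    exact hne (by field_simp at h; linarith)
  have h1 : Real.log (Wv / u) < Wv / u - 1 := Real.log_lt_sub_one_of_pos ht hne1
  have hlog : Real.log (Wv / u) = Real.log Wv - Real.log u := Real.log_div hWv.ne' hu.ne'
  have h2 : u * Real.log (Wv / u) < u * (Wv / u - 1) :=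
    mul_lt_mul_of_pos_left h1 hu
  have h3 : u * (Wv / u - 1) = Wv - u := by field_simp
  nlinarith [h2, h3]

/-- If `γ̄Ω²e^{2ψ(N)} > 1`, then the asymptotic delay-tolerant throughput
`g(τ) = ((1-τ)/ln 2)[2ψ(N) + ln γ̄ + 2 ln Ω - ln((1-τ)/τ)]` attains its maximum on `(0,1)`
at the unique point `τ* = 1/(1 + W(γ̄Ω²e^{2ψ(N)-1}))`. -/
theorem stmt12 (γbar Ω : ℝ) (hγbar : 0 < γbar) (hΩ : 0 < Ω) (N : ℕ) (hN : 1 ≤ N)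
    (W : ℝ → ℝ)
    (hW : ∀ x ≥ (0:ℝ), W x * Real.exp (W x) = x)
    (hW0 : ∀ x ≥ (0:ℝ), 0 ≤ W x)
    (hcond : 1 < γbar * Ω ^ 2 * Real.exp (2 * digammaNat N))
    (g : ℝ → ℝ)
    (hg : ∀ τ, g τ = (1 - τ) / Real.log 2 *
      (2 * digammaNat N + Real.log γbar + 2 * Real.log Ω - Real.log ((1 - τ) / τ))) :
    let τs : ℝ := 1 / (1 + W (γbar * Ω ^ 2 * Real.exp (2 * digammaNat N - 1)))
    τs ∈ Ioo (0:ℝ) 1 ∧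
    (∀ τ ∈ Ioo (0:ℝ) 1, g τ ≤ g τs) ∧
    (∀ τ ∈ Ioo (0:ℝ) 1, τ ≠ τs → g τ < g τs) := by
  intro τs
  set x : ℝ := γbar * Ω ^ 2 * Real.exp (2 * digammaNat N - 1) with hxdef
  have hxpos : 0 < x := by positivity
  set Wv : ℝ := W x with hWvdef
  have hWe : Wv * Real.exp Wv = x := hW x hxpos.le
  have hWnn : 0 ≤ Wv := hW0 x hxpos.le
  have hWpos : 0 < Wv := by
    rcases hWnn.lt_or_eq with h | h
    · exact h
    · exfalso; rw [← h] at hWe; simp at hWe; linarith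
  have h1W : (0:ℝ) < 1 + Wv := by linarith
  have hlog2 : 0 < Real.log 2 := Real.log_pos (by norm_num)
  have hlx1 : Real.log x = Real.log γbar + 2 * Real.log Ω + (2 * digammaNat N - 1) := by
    rw [hxdef, Real.log_mul (by positivity) (Real.exp_ne_zero _),
      Real.log_mul hγbar.ne' (by positivity), Real.log_exp, Real.log_pow]
    push_cast; ring
  have hlx2 : Real.log x = Real.log Wv + Wv := by
    rw [← hWe, Real.log_mul hWpos.ne' (Real.exp_ne_zero _), Real.log_exp]
  have hA : 2 * digammaNat N + Real.log γbar + 2 * Real.log Ω = 1 + Wv + Real.log Wv := by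
    linarith
  have hτs : τs = 1 / (1 + Wv) := rfl
  have hτs0 : 0 < τs := by rw [hτs]; positivity
  have hτs1 : τs < 1 := by
    rw [hτs, div_lt_one h1W]; linarith
  have h1τs : 1 - τs = Wv / (1 + Wv) := by
    rw [hτs]; field_simp; ring
  have hratio : (1 - τs) / τs = Wv := by
    rw [h1τs, hτs]; field_simp
  have hgτs : g τs = Wv / Real.log 2 := by
    rw [hg, hratio, hA, h1τs]
    have heq : (1 + Wv + Real.log Wv - Real.log Wv) = 1 + Wv := by ring
    rw [heq]
    field_simp
  -- the core bound, non-strict and strict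
  have main : ∀ τ ∈ Ioo (0:ℝ) 1,
      (1 - τ) * (2 * digammaNat N + Real.log γbar + 2 * Real.log Ω
        - Real.log ((1 - τ) / τ)) ≤ Wv ∧
      (τ ≠ τs → (1 - τ) * (2 * digammaNat N + Real.log γbar + 2 * Real.log Ω
        - Real.log ((1 - τ) / τ)) < Wv) := by
    intro τ hτ
    obtain ⟨hτ0, hτ1⟩ := hτ
    set u : ℝ := (1 - τ) / τ with hudef
    have hu : 0 < u := div_pos (by linarith) hτ0
    have huτ : u * τ = 1 - τ := by rw [hudef]; field_simp
    have h1u : τ * (1 + u) = 1 := by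
      have : τ * (1 + u) = τ + u * τ := by ring
      rw [this, huτ]; ring
    constructor
    · have hk := key_le Wv u hWpos hu
      rw [← hA] at hk
      have := mul_le_mul_of_nonneg_left hk hτ0.le
      calc (1 - τ) * (2 * digammaNat N + Real.log γbar + 2 * Real.log Ω - Real.log u)
          = τ * (u * (2 * digammaNat N + Real.log γbar + 2 * Real.log Ω - Real.log u)) := by
            rw [← huτ]; ring
        _ ≤ τ * (Wv * (1 + u)) := this
        _ = Wv * (τ * (1 + u)) := by ring
        _ = Wv := by rw [h1u]; ring
    · intro hne
      have hune : u ≠ Wv := by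
        intro h
        apply hne
        rw [hτs]
        have : τ * (1 + Wv) = 1 := by rw [← h]; exact h1u
        field_simp
        linarith
      have hk := key_lt Wv u hWpos hu hune
      rw [← hA] at hk
      have := mul_lt_mul_of_pos_left hk hτ0
      calc (1 - τ) * (2 * digammaNat N + Real.log γbar + 2 * Real.log Ω - Real.log u)
          = τ * (u * (2 * digammaNat N + Real.log γbar + 2 * Real.log Ω - Real.log u)) := by
            rw [← huτ]; ring
        _ < τ * (Wv * (1 + u)) := this
        _ = Wv * (τ * (1 + u)) := by ring
        _ = Wv := by rw [h1u]; ring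
  refine ⟨⟨hτs0, hτs1⟩, ?_, ?_⟩
  · intro τ hτ
    rw [hg, hgτs, div_mul_eq_mul_div]
    gcongr
    exact (main τ hτ).1
  · intro τ hτ hne
    rw [hg, hgτs, div_mul_eq_mul_div]
    exact div_lt_div_of_pos_right ((main τ hτ).2 hne) hlog2
end
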